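/- Let v₁, v₂ ∈ ℝ³ be linearly independent, set n = (v₁ × v₂)/|v₁ × v₂|, let (g_{ij}) be the 2×2 matrix with entries g_{ij} = vᵢ·vⱼ and let (g^{ij}) be its inverse. Then for a₁, a₂ ∈ ℝ³ the following are equivalent: (i) a₁ × v₂ = a₂ × v₁; (ii) n·a₁ = 0, n·a₂ = 0 and Σ_{i,j∈{1,2}} g^{ij}(aᵢ·vⱼ) = 0. -/

import Mathlib

open Matrix

noncomputable section

/-- Euclidean norm on `ℝ³`. -/
def norm3 (a : Fin 3 → ℝ) : ℝ := Real.sqrt (a ⬝ᵥ a)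

lemma cross_sub_dot₀ (a0 a1 v0 v1 : Fin 3 → ℝ) :
    (a0 ⨯₃ v1 - a1 ⨯₃ v0) ⬝ᵥ v0 = -((v0 ⨯₃ v1) ⬝ᵥ a0) := by
  simp [crossProduct, dotProduct, Fin.sum_univ_three]; ring

lemma cross_sub_dot₁ (a0 a1 v0 v1 : Fin 3 → ℝ) :
    (a0 ⨯₃ v1 - a1 ⨯₃ v0) ⬝ᵥ v1 = -((v0 ⨯₃ v1) ⬝ᵥ a1) := by
  simp [crossProduct, dotProduct, Fin.sum_univ_three]; ring

lemma cross_sub_dot_c (a0 a1 v0 v1 : Fin 3 → ℝ) :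
    (a0 ⨯₃ v1 - a1 ⨯₃ v0) ⬝ᵥ (v0 ⨯₃ v1) =
      (v1 ⬝ᵥ v1) * (a0 ⬝ᵥ v0) - (v1 ⬝ᵥ v0) * (a0 ⬝ᵥ v1)
        - (v0 ⬝ᵥ v1) * (a1 ⬝ᵥ v0) + (v0 ⬝ᵥ v0) * (a1 ⬝ᵥ v1) := by
  simp [crossProduct, dotProduct, Fin.sum_univ_three]; ring

lemma lagrange3 (v0 v1 : Fin 3 → ℝ) :
    (v0 ⬝ᵥ v0) * (v1 ⬝ᵥ v1) - (v0 ⬝ᵥ v1) * (v1 ⬝ᵥ v0) = (v0 ⨯₃ v1) ⬝ᵥ (v0 ⨯₃ v1) := by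
  simp [crossProduct, dotProduct, Fin.sum_univ_three]; ring

lemma key_identity3 (v0 v1 w : Fin 3 → ℝ) :
    ((v0 ⨯₃ v1) ⬝ᵥ (v0 ⨯₃ v1)) • w
      = (w ⬝ᵥ (v0 ⨯₃ v1)) • (v0 ⨯₃ v1)
        - (v0 ⨯₃ v1) ⨯₃ ((v0 ⬝ᵥ w) • v1 - (v1 ⬝ᵥ w) • v0) := by
  funext i
  fin_cases i <;>
    (simp [crossProduct, dotProduct, Fin.sum_univ_three]; ring)

/-- Let `v 0, v 1 ∈ ℝ³` be linearly independent, `n` the unit normal,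
`g` the Gram matrix and `g⁻¹` its inverse. Then for `a 0, a 1 ∈ ℝ³`:
`a₁ × v₂ = a₂ × v₁` iff `n·aᵢ = 0` for `i = 1,2` and `Σᵢⱼ gⁱʲ (aᵢ·vⱼ) = 0`. -/
theorem closedness_iff_tangential_tracefree
    (v : Fin 2 → Fin 3 → ℝ) (hv : LinearIndependent ℝ v)
    (n : Fin 3 → ℝ) (hn : n = (norm3 (v 0 ⨯₃ v 1))⁻¹ • (v 0 ⨯₃ v 1))
    (g : Matrix (Fin 2) (Fin 2) ℝ) (hg : g = Matrix.of fun i j => v i ⬝ᵥ v j)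
    (a : Fin 2 → Fin 3 → ℝ) :
    a 0 ⨯₃ v 1 = a 1 ⨯₃ v 0 ↔
      ((∀ i : Fin 2, n ⬝ᵥ a i = 0) ∧ ∑ i : Fin 2, ∑ j : Fin 2, g⁻¹ i j * (a i ⬝ᵥ v j) = 0) := by
  set c : Fin 3 → ℝ := v 0 ⨯₃ v 1 with hc_def
  -- c ≠ 0
  have hveq : ![v 0, v 1] = v := by
    funext i; fin_cases i <;> rfl
  have hc : c ≠ 0 := by
    rw [hc_def]
    exact crossProduct_ne_zero_iff_linearIndependent.mpr (hveq ▸ hv)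
  have hcc_nonneg : 0 ≤ c ⬝ᵥ c :=
    Finset.sum_nonneg fun i _ => mul_self_nonneg _
  have hcc_ne : c ⬝ᵥ c ≠ 0 := fun h => hc (dotProduct_self_eq_zero.mp h)
  have hcc_pos : 0 < c ⬝ᵥ c := lt_of_le_of_ne hcc_nonneg (Ne.symm hcc_ne)
  have hnorm_ne : (norm3 c) ≠ 0 := by
    rw [norm3, Real.sqrt_ne_zero']; exact hcc_pos
  -- n ⬝ᵥ a i
  have hndot : ∀ w : Fin 3 → ℝ, n ⬝ᵥ w = (norm3 c)⁻¹ * (c ⬝ᵥ w) := by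
    intro w; rw [hn, smul_dotProduct]; rfl
  have hndot0 : ∀ w : Fin 3 → ℝ, (n ⬝ᵥ w = 0 ↔ c ⬝ᵥ w = 0) := by
    intro w
    rw [hndot]
    constructor
    · intro h
      rcases mul_eq_zero.mp h with h | h
      · exact absurd h (inv_ne_zero hnorm_ne)
      · exact h
    · intro h; rw [h, mul_zero]
  -- determinant of g
  have hdet : g.det = c ⬝ᵥ c := by
    rw [Matrix.det_fin_two, hg]
    simpa using lagrange3 (v 0) (v 1)
  have hdet_ne : g.det ≠ 0 := by rw [hdet]; exact hcc_ne
  -- trace expression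
  set T : ℝ := (v 1 ⬝ᵥ v 1) * (a 0 ⬝ᵥ v 0) - (v 1 ⬝ᵥ v 0) * (a 0 ⬝ᵥ v 1)
      - (v 0 ⬝ᵥ v 1) * (a 1 ⬝ᵥ v 0) + (v 0 ⬝ᵥ v 0) * (a 1 ⬝ᵥ v 1) with hT_def
  have hsum : ∑ i : Fin 2, ∑ j : Fin 2, g⁻¹ i j * (a i ⬝ᵥ v j) = (c ⬝ᵥ c)⁻¹ * T := by
    have hinv : g⁻¹ = (g.det)⁻¹ • g.adjugate := by
      rw [Matrix.inv_def, Ring.inverse_eq_inv]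
    rw [hinv, Matrix.adjugate_fin_two]
    simp only [Fin.sum_univ_two, Matrix.smul_apply, Matrix.of_apply, Matrix.cons_val',
      Matrix.cons_val_zero, Matrix.cons_val_one, Matrix.head_cons, Matrix.head_fin_const,
      Matrix.empty_val', Matrix.cons_val_fin_one, smul_eq_mul, hdet]
    rw [hT_def, hg]
    simp only [Matrix.of_apply]
    rw [dotProduct_comm (v 1) (v 0)]
    ring
  have hsum_iff : (∑ i : Fin 2, ∑ j : Fin 2, g⁻¹ i j * (a i ⬝ᵥ v j) = 0) ↔ T = 0 := by
    rw [hsum]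
    constructor
    · intro h
      rcases mul_eq_zero.mp h with h | h
      · exact absurd h (inv_ne_zero hcc_ne)
      · exact h
    · intro h; rw [h, mul_zero]
  set w : Fin 3 → ℝ := a 0 ⨯₃ v 1 - a 1 ⨯₃ v 0 with hw_def
  have hwT : w ⬝ᵥ c = T := cross_sub_dot_c (a 0) (a 1) (v 0) (v 1)
  have hw0 : w ⬝ᵥ v 0 = -(c ⬝ᵥ a 0) := cross_sub_dot₀ (a 0) (a 1) (v 0) (v 1)
  have hw1 : w ⬝ᵥ v 1 = -(c ⬝ᵥ a 1) := cross_sub_dot₁ (a 0) (a 1) (v 0) (v 1)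
  constructor
  · intro h
    have hwz : w = 0 := sub_eq_zero_of_eq h
    refine ⟨?_, ?_⟩
    · intro i
      rw [hndot0]
      fin_cases i
      · have := hw0; rw [hwz, zero_dotProduct] at this
        exact neg_eq_zero.mp this.symm
      · have := hw1; rw [hwz, zero_dotProduct] at this
        exact neg_eq_zero.mp this.symm
    · rw [hsum_iff, ← hwT, hwz]
      simp
  · rintro ⟨htan, htr⟩
    have ha0 : c ⬝ᵥ a 0 = 0 := (hndot0 _).mp (htan 0)
    have ha1 : c ⬝ᵥ a 1 = 0 := (hndot0 _).mp (htan 1)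
    have hT0 : T = 0 := hsum_iff.mp htr
    have hwv0 : v 0 ⬝ᵥ w = 0 := by
      rw [dotProduct_comm, hw0, ha0, neg_zero]
    have hwv1 : v 1 ⬝ᵥ w = 0 := by
      rw [dotProduct_comm, hw1, ha1, neg_zero]
    have hwc : w ⬝ᵥ c = 0 := by rw [hwT, hT0]
    have hkey := key_identity3 (v 0) (v 1) w
    rw [← hc_def, hwc, hwv0, hwv1] at hkey
    simp only [zero_smul, sub_self, zero_sub, map_zero, sub_zero] at hkey
    have hwz : w = 0 := by
      rcases smul_eq_zero.mp hkey with h | h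
      · exact absurd h hcc_ne
      · exact h
    exact sub_eq_zero.mp hwz
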